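/- For every integer t with 1 ≤ t ≤ (k+1)/2, there exists a graph G on k + 2t − 3 vertices such that neither G nor its complement contains an induced subgraph on exactly k vertices with minimum degree at least t; i.e., the fixed quasi-Ramsey number satisfies R*_t(k) ≥ k + 2t − 2. A witnessing construction: V = P ∪ Q ∪ R where P is a clique on 2(t−1) vertices, Q is an independent set on 2(t−1) vertices, R is an independent set on k − 2t + 1 vertices, all edges between P and R are present, no edges between Q and R are present, and the bipartite graph between P and Q is (t−1)-regular. -/

import Mathlib

open scoped Classical

/-- The fixed quasi-Ramsey number `R*_t(k)`: the least `N` (as an extended natural,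
`⊤` if none exists) such that every graph on `N` vertices contains a set `S` of
exactly `k` vertices with `G[S]` or its complement of minimum degree at least `t`. -/
noncomputable def Rfix (t k : ℕ) : ℕ∞ :=
  sInf {n : ℕ∞ | ∃ N : ℕ, n = N ∧ ∀ G : SimpleGraph (Fin N),
    ∃ S : Finset (Fin N), S.card = k ∧
      ((∀ v ∈ S, t ≤ (S.filter (G.Adj v)).card) ∨
       (∀ v ∈ S, t ≤ (S.filter (Gᶜ.Adj v)).card))}

private lemma aux_lt (m s : ℕ) (hs : 1 ≤ s) [NeZero m] :
    (Finset.univ.filter (fun a : ZMod m => a.val < s)).card ≤ s := by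
  calc (Finset.univ.filter (fun a : ZMod m => a.val < s)).card
      ≤ (Finset.univ : Finset (Fin s)).card := by
        apply Finset.card_le_card_of_injOn
          (fun a : ZMod m => (⟨min a.val (s-1), by omega⟩ : Fin s))
        · intro a _; exact Finset.mem_univ _
        · intro a ha b hb h
          simp only [Finset.coe_filter, Set.mem_setOf_eq] at ha hb
          have h' : min a.val (s-1) = min b.val (s-1) := congrArg Fin.val h
          have : a.val = b.val := by omega
          exact ZMod.val_injective m this
    _ = s := by simp

private lemma aux_ge (s : ℕ) (hs : 1 ≤ s) [NeZero (2*s)] :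
    (Finset.univ.filter (fun a : ZMod (2*s) => s ≤ a.val)).card ≤ s := by
  calc (Finset.univ.filter (fun a : ZMod (2*s) => s ≤ a.val)).card
      ≤ (Finset.univ : Finset (Fin s)).card := by
        apply Finset.card_le_card_of_injOn
          (fun a : ZMod (2*s) => (⟨min (a.val - s) (s-1), by omega⟩ : Fin s))
        · intro a _; exact Finset.mem_univ _
        · intro a ha b hb h
          simp only [Finset.coe_filter, Set.mem_setOf_eq] at ha hb
          have h' : min (a.val - s) (s-1) = min (b.val - s) (s-1) := congrArg Fin.val h
          have hav := ZMod.val_lt a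
          have hbv := ZMod.val_lt b
          have : a.val = b.val := by omega
          exact ZMod.val_injective _ this
    _ = s := by simp

/-- The relation defining the construction: `P = [0, 2s)` is a clique, joined completely to
`R = [4s, n)`, and joined to `Q = [2s, 4s)` by an `s`-regular circulant bipartite graph;
`Q` and `R` are independent with no edges between them. -/
private def rel (s n : ℕ) (x y : Fin n) : Prop :=
  (x.val < 2*s ∧ y.val < 2*s) ∨ (x.val < 2*s ∧ 4*s ≤ y.val) ∨
  (x.val < 2*s ∧ 2*s ≤ y.val ∧ y.val < 4*s ∧
    (((y.val - 2*s : ℕ) : ZMod (2*s)) - (x.val : ℕ)).val < s)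

private lemma construction (k t : ℕ) (ht : 2 ≤ t) (htk : 2 * t ≤ k + 1) :
    ∃ G : SimpleGraph (Fin (k + 2 * t - 3)),
      ∀ S : Finset (Fin (k + 2 * t - 3)), S.card = k →
        (∃ v ∈ S, (S.filter (G.Adj v)).card < t) ∧
        (∃ v ∈ S, (S.filter (Gᶜ.Adj v)).card < t) := by
  set n := k + 2 * t - 3 with hn
  set s := t - 1 with hsdef
  have hs : 1 ≤ s := by omega
  have h2s : 2 * s ≤ n := by omega
  have h4s : 4 * s ≤ n := by omega
  have hst : s < t := by omega
  haveI : NeZero (2 * s) := ⟨by omega⟩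
  refine ⟨SimpleGraph.fromRel (rel s n), ?_⟩
  set G := SimpleGraph.fromRel (rel s n) with hG
  have hadj : ∀ x y : Fin n, G.Adj x y ↔ x ≠ y ∧ (rel s n x y ∨ rel s n y x) :=
    fun x y => SimpleGraph.fromRel_adj (rel s n) x y
  -- degree bound for vertices in Q
  have degQ : ∀ q : Fin n, 2*s ≤ q.val → q.val < 4*s →
      (Finset.univ.filter (G.Adj q)).card ≤ s := by
    intro q hq1 hq2
    have key : ∀ x : Fin n, G.Adj q x →
        x.val < 2*s ∧ ((((q.val - 2*s : ℕ) : ZMod (2*s)) - (x.val : ℕ))).val < s := by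
      intro x hx
      rw [hadj] at hx
      obtain ⟨-, h | h⟩ := hx
      · rcases h with ⟨h1,-⟩|⟨h1,-⟩|⟨h1,-⟩ <;> omega
      · rcases h with ⟨h1,h2⟩|⟨h1,h2⟩|⟨h1,h2,h3,h4⟩
        · omega
        · omega
        · exact ⟨h1, h4⟩
    calc (Finset.univ.filter (G.Adj q)).card
        ≤ (Finset.univ.filter (fun a : ZMod (2*s) => a.val < s)).card := by
          apply Finset.card_le_card_of_injOn
            (fun x : Fin n => ((q.val - 2*s : ℕ) : ZMod (2*s)) - (x.val : ℕ))
          · intro x hx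
            simp only [Finset.mem_coe, Finset.mem_filter, Finset.mem_univ, true_and] at hx ⊢
            exact (key x hx).2
          · intro a ha b hb h
            simp only [Finset.coe_filter, Set.mem_setOf_eq] at ha hb
            have ha' := (key a ha.2).1
            have hb' := (key b hb.2).1
            have h2 : ((a.val : ℕ) : ZMod (2*s)) = ((b.val : ℕ) : ZMod (2*s)) :=
              sub_right_injective h
            have h3 : a.val = b.val := by
              have := congrArg ZMod.val h2
              rwa [ZMod.val_cast_of_lt (by omega), ZMod.val_cast_of_lt (by omega)] at this
            exact Fin.ext h3
      _ ≤ s := aux_lt (2*s) s hs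
  -- complement degree bound for vertices in P
  have degP : ∀ p : Fin n, p.val < 2*s →
      (Finset.univ.filter (Gᶜ.Adj p)).card ≤ s := by
    intro p hp
    have key : ∀ x : Fin n, Gᶜ.Adj p x →
        2*s ≤ x.val ∧ x.val < 4*s ∧
          s ≤ ((((x.val - 2*s : ℕ) : ZMod (2*s)) - (p.val : ℕ))).val := by
      intro x hx
      rw [SimpleGraph.compl_adj, hadj] at hx
      obtain ⟨hne, hnadj⟩ := hx
      have hnr : ¬ rel s n p x := fun h => hnadj ⟨hne, Or.inl h⟩
      simp only [rel, not_or] at hnr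
      obtain ⟨hA, hB, hC⟩ := hnr
      have hx1 : 2*s ≤ x.val := by by_contra h; exact hA ⟨hp, by omega⟩
      have hx2 : x.val < 4*s := by by_contra h; exact hB ⟨hp, by omega⟩
      refine ⟨hx1, hx2, ?_⟩
      by_contra h
      exact hC ⟨hp, hx1, hx2, by omega⟩
    calc (Finset.univ.filter (Gᶜ.Adj p)).card
        ≤ (Finset.univ.filter (fun a : ZMod (2*s) => s ≤ a.val)).card := by
          apply Finset.card_le_card_of_injOn
            (fun x : Fin n => ((x.val - 2*s : ℕ) : ZMod (2*s)) - ((p.val : ℕ) : ZMod (2*s)))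
          · intro x hx
            simp only [Finset.mem_coe, Finset.mem_filter, Finset.mem_univ, true_and] at hx ⊢
            exact (key x hx).2.2
          · intro a ha b hb h
            simp only [Finset.coe_filter, Set.mem_setOf_eq] at ha hb
            obtain ⟨ha1, ha2, -⟩ := key a ha.2
            obtain ⟨hb1, hb2, -⟩ := key b hb.2
            have h2 : ((a.val - 2*s : ℕ) : ZMod (2*s)) = ((b.val - 2*s : ℕ) : ZMod (2*s)) :=
              sub_left_injective h
            have h3 : a.val - 2*s = b.val - 2*s := by
              have := congrArg ZMod.val h2
              rwa [ZMod.val_cast_of_lt (by omega), ZMod.val_cast_of_lt (by omega)] at this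
            exact Fin.ext (by omega)
      _ ≤ s := aux_ge s hs
  -- every k-set hits P and Q
  have hitgen : ∀ (A : Finset (Fin n)), 2*s ≤ A.card → ∀ S : Finset (Fin n), S.card = k →
      ∃ v ∈ S, v ∈ A := by
    intro A hA S hS
    by_contra hc
    push_neg at hc
    have hsub : A ⊆ Sᶜ := fun x hx => Finset.mem_compl.mpr (fun hxS => hc x hxS hx)
    have h1 := Finset.card_le_card hsub
    rw [Finset.card_compl, hS, Fintype.card_fin] at h1
    omega
  have cardP : 2*s ≤ (Finset.univ.filter (fun x : Fin n => x.val < 2*s)).card := by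
    have h := Finset.card_le_card_of_injOn
      (fun i : Fin (2*s) => (⟨i.val, by have := i.isLt; omega⟩ : Fin n))
      (s := Finset.univ) (t := Finset.univ.filter (fun x : Fin n => x.val < 2*s))
      (fun i _ => by simp [i.isLt]) ?_
    · simpa using h
    · intro a _ b _ h
      have h' := congrArg Fin.val h
      simp only at h'
      exact Fin.ext h'
  have cardQ : 2*s ≤ (Finset.univ.filter (fun x : Fin n => 2*s ≤ x.val ∧ x.val < 4*s)).card := by
    have h := Finset.card_le_card_of_injOn
      (fun i : Fin (2*s) => (⟨2*s + i.val, by have := i.isLt; omega⟩ : Fin n))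
      (s := Finset.univ) (t := Finset.univ.filter (fun x : Fin n => 2*s ≤ x.val ∧ x.val < 4*s))
      (fun i _ => by simp; have := i.isLt; omega) ?_
    · simpa using h
    · intro a _ b _ h
      have := congrArg Fin.val h
      simp only at this
      exact Fin.ext (by omega)
  intro S hS
  constructor
  · obtain ⟨q, hqS, hq⟩ := hitgen _ cardQ S hS
    simp only [Finset.mem_filter, Finset.mem_univ, true_and] at hq
    refine ⟨q, hqS, lt_of_le_of_lt (le_trans ?_ (degQ q hq.1 hq.2)) hst⟩
    exact Finset.card_le_card (fun x hx => by
      simp only [Finset.mem_filter] at hx ⊢; exact ⟨Finset.mem_univ _, hx.2⟩)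
  · obtain ⟨p, hpS, hp⟩ := hitgen _ cardP S hS
    simp only [Finset.mem_filter, Finset.mem_univ, true_and] at hp
    refine ⟨p, hpS, lt_of_le_of_lt (le_trans ?_ (degP p hp)) hst⟩
    exact Finset.card_le_card (fun x hx => by
      simp only [Finset.mem_filter] at hx ⊢; exact ⟨Finset.mem_univ _, hx.2⟩)

private lemma lb_aux (k t : ℕ) (ht : 1 ≤ t) (hk : 1 ≤ k)
    (hG : ∃ G : SimpleGraph (Fin (k + 2 * t - 3)),
      ∀ S : Finset (Fin (k + 2 * t - 3)), S.card = k →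
        (∃ v ∈ S, (S.filter (G.Adj v)).card < t) ∧
        (∃ v ∈ S, (S.filter (Gᶜ.Adj v)).card < t)) :
    ((k + 2 * t - 2 : ℕ) : ℕ∞) ≤ Rfix t k := by
  apply le_sInf
  rintro x ⟨N, rfl, hN⟩
  rw [Nat.cast_le]
  by_contra hlt
  push_neg at hlt
  have hle : N ≤ k + 2 * t - 3 := by omega
  obtain ⟨G, hGbad⟩ := hG
  obtain ⟨S, hScard, hdeg⟩ := hN (G.comap (Fin.castLE hle))
  have hfi : Function.Injective (Fin.castLE hle) := Fin.castLE_injective hle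
  set e : Fin N ↪ Fin (k + 2*t - 3) := ⟨Fin.castLE hle, hfi⟩ with he
  have hS' : (S.map e).card = k := by rw [Finset.card_map, hScard]
  have hfilter1 : ∀ u, ((S.map e).filter (G.Adj (e u))).card
      = (S.filter ((G.comap (Fin.castLE hle)).Adj u)).card := by
    intro u
    rw [Finset.filter_map, Finset.card_map]
    apply Finset.card_nbij id (fun a ha => ?_) (fun a ha b hb h => h) (fun a ha => ⟨a, ?_, rfl⟩)
    · simp only [Finset.mem_coe, Finset.mem_filter] at ha ⊢
      exact ⟨ha.1, ha.2⟩
    · simp only [Finset.mem_coe, Finset.mem_filter] at ha ⊢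
      exact ⟨ha.1, ha.2⟩
  have hfilter2 : ∀ u, ((S.map e).filter (Gᶜ.Adj (e u))).card
      = (S.filter ((G.comap (Fin.castLE hle))ᶜ.Adj u)).card := by
    intro u
    rw [Finset.filter_map, Finset.card_map]
    apply Finset.card_bij (fun a _ => a) (fun a ha => ?_) (fun a ha b hb h => h)
      (fun a ha => ⟨a, ?_, rfl⟩)
    · simp only [Finset.mem_filter, Function.comp_apply, SimpleGraph.compl_adj,
        SimpleGraph.comap_adj, he] at ha ⊢
      exact ⟨ha.1, fun hab => ha.2.1 (congrArg _ hab), ha.2.2⟩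
    · simp only [Finset.mem_filter, Function.comp_apply, SimpleGraph.compl_adj,
        SimpleGraph.comap_adj, he] at ha ⊢
      exact ⟨ha.1, fun hab => ha.2.1 (hfi hab), ha.2.2⟩
  obtain ⟨⟨v1, hv1, hd1⟩, ⟨v2, hv2, hd2⟩⟩ := hGbad (S.map e) hS'
  rcases hdeg with h | h
  · obtain ⟨u, hu, rfl⟩ := Finset.mem_map.mp hv1
    have h1 := h u hu
    replace h1 : t ≤ ((S.map e).filter (G.Adj (e u))).card := by rw [hfilter1 u]; convert h1
    omega
  · obtain ⟨u, hu, rfl⟩ := Finset.mem_map.mp hv2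
    have h1 := h u hu
    replace h1 : t ≤ ((S.map e).filter (Gᶜ.Adj (e u))).card := by rw [hfilter2 u]; convert h1
    omega

theorem fixed_quasi_ramsey_lower (k t : ℕ) (ht : 1 ≤ t) (htk : 2 * t ≤ k + 1) :
    (∃ G : SimpleGraph (Fin (k + 2 * t - 3)),
      ∀ S : Finset (Fin (k + 2 * t - 3)), S.card = k →
        (∃ v ∈ S, (S.filter (G.Adj v)).card < t) ∧
        (∃ v ∈ S, (S.filter (Gᶜ.Adj v)).card < t)) ∧
    ((k + 2 * t - 2 : ℕ) : ℕ∞) ≤ Rfix t k := by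
  have hk : 1 ≤ k := by omega
  rcases Nat.lt_or_ge t 2 with h1 | h2
  · have hcon : ∃ G : SimpleGraph (Fin (k + 2 * t - 3)),
        ∀ S : Finset (Fin (k + 2 * t - 3)), S.card = k →
          (∃ v ∈ S, (S.filter (G.Adj v)).card < t) ∧
          (∃ v ∈ S, (S.filter (Gᶜ.Adj v)).card < t) := by
      refine ⟨⊥, fun S hS => absurd hS ?_⟩
      have := Finset.card_le_univ S
      rw [Fintype.card_fin] at this
      omega
    exact ⟨hcon, lb_aux k t ht hk hcon⟩
  · have hcon := construction k t h2 htk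
    exact ⟨hcon, lb_aux k t ht hk hcon⟩
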